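/- Let Q be a measurable space and T a Markov kernel from Q to Q. Let R : Q → ℝ be measurable with 0 ≤ R(y) ≤ R_max for all y, let γ ∈ [0,1] and N ∈ ℕ, and define V_N(y) = R(y), V_i(y) = R(y) + γ ∫ V_{i+1}(y') (T y)(dy') for 0 ≤ i < N. Let I be a finite type with a distinguished element 'abs', and let (C_i)_{i∈I} be pairwise disjoint measurable subsets of Q whose union is Q. Let P̌, P̂ : I × I → [0,1] satisfy: (i) for every i ≠ abs, every j ∈ I, and every y ∈ C_i, P̌(i,j) ≤ (T y)(C_j) ≤ P̂(i,j); (ii) P̌(abs,abs) = P̂(abs,abs) = 1 and P̌(abs,j) = P̂(abs,j) = 0 for all j ≠ abs. Call π : ℕ → I → I → ℝ an adversary if for each t ∈ ℕ and i ∈ I, π(t,i,·) is a probability mass function on I with P̌(i,j) ≤ π(t,i,j) ≤ P̂(i,j) for all j. Suppose there is a measurable set N₀ ⊆ C_abs with (T y)(N₀) = 0 for every y ∈ Q, and let Ř : I → ℝ satisfy 0 ≤ Ř(i), Ř(i) ≤ R(y) for every i ≠ abs and y ∈ C_i, and Ř(abs) ≤ R(y) for every y ∈ Q \ N₀. For an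 adversary π define V̌_{π,N}(i) = Ř(i) and V̌_{π,t}(i) = Ř(i) + γ · Σ_{j∈I} V̌_{π,t+1}(j) · π(t,i,j) for 0 ≤ t < N. Then for every i₀ ≠ abs and every y₀ ∈ C_{i₀}: inf over adversaries π of V̌_{π,0}(i₀) ≤ V_0(y₀). -/

import Mathlib

open MeasureTheory ProbabilityTheory

/-- An adversary of the interval Markov chain with transition probability bounds
`Pl, Pu : I → I → ℝ`: at each time `t` and state `i` it chooses a probability mass function
`π t i` on `I` lying between the bounds. -/
def IsAdversary {I : Type*} [Fintype I] (Pl Pu : I → I → ℝ) (π : ℕ → I → I → ℝ) : Prop :=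
  ∀ (t : ℕ) (i : I),
    (∀ j, 0 ≤ π t i j) ∧ (∑ j, π t i j = 1) ∧ (∀ j, Pl i j ≤ π t i j ∧ π t i j ≤ Pu i j)

/-- Backward value iteration for cumulative discounted rewards on the interval Markov chain,
under adversary `π`, with horizon `N`, discount `γ` and state reward `Rew`:
`advVal N γ Rew π N i = Rew i` and
`advVal N γ Rew π t i = Rew i + γ * Σ_j advVal N γ Rew π (t+1) j * π t i j` for `t < N`. -/
noncomputable def advVal {I : Type*} [Fintype I] (N : ℕ) (γ : ℝ) (Rew : I → ℝ)
    (π : ℕ → I → I → ℝ) (t : ℕ) (i : I) : ℝ :=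
  if h : t < N then Rew i + γ * ∑ j, advVal N γ Rew π (t + 1) j * π t i j
  else Rew i
termination_by N - t
decreasing_by omega

section Aux

variable {I : Type*} [Fintype I]

theorem advVal_of_lt (N : ℕ) (γ : ℝ) (Rew : I → ℝ) (π : ℕ → I → I → ℝ) {t : ℕ}
    (h : t < N) (i : I) :
    advVal N γ Rew π t i = Rew i + γ * ∑ j, advVal N γ Rew π (t + 1) j * π t i j := by
  rw [advVal]; simp [h]

theorem advVal_of_ge (N : ℕ) (γ : ℝ) (Rew : I → ℝ) (π : ℕ → I → I → ℝ) {t : ℕ}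
    (h : ¬ t < N) (i : I) : advVal N γ Rew π t i = Rew i := by
  rw [advVal]; simp [h]

theorem advVal_congr (N : ℕ) (γ : ℝ) (Rew : I → ℝ) (π π' : ℕ → I → I → ℝ) (t : ℕ)
    (h : ∀ s, t ≤ s → s < N → π s = π' s) (i : I) :
    advVal N γ Rew π t i = advVal N γ Rew π' t i := by
  by_cases hlt : t < N
  · rw [advVal_of_lt _ _ _ _ hlt, advVal_of_lt _ _ _ _ hlt, h t le_rfl hlt]
    congr 2
    refine Finset.sum_congr rfl fun j _ => ?_
    rw [advVal_congr N γ Rew π π' (t + 1) (fun s hs hsN => h s (by omega) hsN) j]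
  · rw [advVal_of_ge _ _ _ _ hlt, advVal_of_ge _ _ _ _ hlt]
termination_by N - t
decreasing_by omega

theorem advVal_nonneg (N : ℕ) {γ : ℝ} (hγ : 0 ≤ γ) {Rew : I → ℝ} (hR : ∀ i, 0 ≤ Rew i)
    {π : ℕ → I → I → ℝ} (hπ : ∀ t i j, 0 ≤ π t i j) (t : ℕ) (i : I) :
    0 ≤ advVal N γ Rew π t i := by
  by_cases hlt : t < N
  · rw [advVal_of_lt _ _ _ _ hlt]
    have : 0 ≤ ∑ j, advVal N γ Rew π (t + 1) j * π t i j :=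
      Finset.sum_nonneg fun j _ =>
        mul_nonneg (advVal_nonneg N hγ hR hπ (t + 1) j) (hπ t i j)
    have h2 := mul_nonneg hγ this
    have h3 := hR i
    linarith
  · rw [advVal_of_ge _ _ _ _ hlt]; exact hR i
termination_by N - t
decreasing_by omega

/-- The set of admissible rows at state `i`. -/
def rowSet (Pl Pu : I → I → ℝ) (i : I) : Set (I → ℝ) :=
  {p | (∀ j, 0 ≤ p j) ∧ (∑ j, p j = 1) ∧ ∀ j, Pl i j ≤ p j ∧ p j ≤ Pu i j}

theorem isCompact_rowSet (Pl Pu : I → I → ℝ) (i : I) : IsCompact (rowSet Pl Pu i) := by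
  have h1 : IsClosed {p : I → ℝ | ∀ j, 0 ≤ p j} := by
    rw [Set.setOf_forall]
    exact isClosed_iInter fun j => isClosed_le continuous_const (continuous_apply j)
  have h2 : IsClosed {p : I → ℝ | ∑ j, p j = 1} :=
    isClosed_eq (by fun_prop) continuous_const
  have h3 : IsClosed {p : I → ℝ | ∀ j, Pl i j ≤ p j ∧ p j ≤ Pu i j} := by
    rw [Set.setOf_forall]
    exact isClosed_iInter fun j =>
      (isClosed_le continuous_const (continuous_apply j)).inter
        (isClosed_le (continuous_apply j) continuous_const)
  have hc : IsClosed (rowSet Pl Pu i) := h1.inter (h2.inter h3)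
  refine IsCompact.of_isClosed_subset (isCompact_Icc (a := (0 : I → ℝ)) (b := 1)) hc ?_
  intro p hp
  refine ⟨fun j => hp.1 j, fun j => ?_⟩
  calc p j ≤ ∑ k, p k := Finset.single_le_sum (fun k _ => hp.1 k) (Finset.mem_univ j)
    _ = 1 := hp.2.1

theorem rowSet_exists_min (Pl Pu : I → I → ℝ) (i : I) (hne : (rowSet Pl Pu i).Nonempty)
    (a : I → ℝ) :
    ∃ p ∈ rowSet Pl Pu i, ∀ q ∈ rowSet Pl Pu i, ∑ j, a j * p j ≤ ∑ j, a j * q j := by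
  obtain ⟨p, hp, hmin⟩ := (isCompact_rowSet Pl Pu i).exists_isMinOn hne
    (f := fun p : I → ℝ => ∑ j, a j * p j) (Continuous.continuousOn (by fun_prop))
  exact ⟨p, hp, fun q hq => isMinOn_iff.mp hmin q hq⟩

/-- Build the greedy adversary backwards: `buildTail N γ Rl d rmin k` has, at the last `k`
time steps before the horizon, the row minimizing the expected continuation value; elsewhere
it uses the default rows `d`. -/
noncomputable def buildTail (N : ℕ) (γ : ℝ) (Rl : I → ℝ) (d : I → I → ℝ)
    (rmin : I → (I → ℝ) → I → ℝ) : ℕ → ℕ → I → I → ℝ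
  | 0 => fun _ => d
  | (k + 1) => fun t i =>
      if t = N - (k + 1) then
        rmin i (fun j => advVal N γ Rl (buildTail N γ Rl d rmin k) (t + 1) j)
      else buildTail N γ Rl d rmin k t i

theorem buildTail_mem {Pl Pu : I → I → ℝ} (N : ℕ) (γ : ℝ) (Rl : I → ℝ) {d : I → I → ℝ}
    {rmin : I → (I → ℝ) → I → ℝ} (hd : ∀ i, d i ∈ rowSet Pl Pu i)
    (hr : ∀ i a, rmin i a ∈ rowSet Pl Pu i) :
    ∀ k t i, buildTail N γ Rl d rmin k t i ∈ rowSet Pl Pu i := by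
  intro k
  induction k with
  | zero => intro t i; exact hd i
  | succ k ih =>
      intro t i
      by_cases h : t = N - (k + 1)
      · simp only [buildTail, h, if_true]; exact hr i _
      · simp only [buildTail, h, if_false]; exact ih t i

theorem buildTail_stable (N : ℕ) (γ : ℝ) (Rl : I → ℝ) (d : I → I → ℝ)
    (rmin : I → (I → ℝ) → I → ℝ) :
    ∀ k' ≤ N, ∀ k ≤ k', ∀ t, N - k ≤ t →
      buildTail N γ Rl d rmin k' t = buildTail N γ Rl d rmin k t := by
  intro k'
  induction k' with
  | zero => intro _ k hk t _; interval_cases k; rfl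
  | succ m ih =>
      intro hm1 k hk t ht
      rcases Nat.eq_or_lt_of_le hk with h | h
      · rw [h]
      · have hkm : k ≤ m := by omega
        have hne : t ≠ N - (m + 1) := by omega
        funext i
        simp only [buildTail, hne, if_false]
        rw [ih (by omega) k hkm t ht]

end Aux

/-- lower-bound half of Theorem 1 of the paper, for cumulative discounted
rewards. The infimum over adversaries of the IMC value function with lower rewards `Rl`
lower-bounds the value function `V` of the Markov kernel `T`, for every starting cell
`i₀ ≠ abs` and every point `y₀` in that cell. -/
theorem imc_inf_le_value_cumulative
    {Q : Type*} [MeasurableSpace Q] (T : Kernel Q Q) [IsMarkovKernel T]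
    (Rmax : ℝ) (R : Q → ℝ) (hRmeas : Measurable R) (hR : ∀ y, R y ∈ Set.Icc 0 Rmax)
    (γ : ℝ) (hγ : γ ∈ Set.Icc (0 : ℝ) 1) (N : ℕ)
    (V : ℕ → Q → ℝ)
    (hVN : ∀ y, V N y = R y)
    (hVi : ∀ i < N, ∀ y, V i y = R y + γ * ∫ y', V (i + 1) y' ∂(T y))
    {I : Type*} [Fintype I] (abs : I)
    (C : I → Set Q) (hCmeas : ∀ i, MeasurableSet (C i))
    (hCdisj : Pairwise (Function.onFun Disjoint C))
    (hCunion : ⋃ i, C i = Set.univ)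
    (Pl Pu : I → I → ℝ)
    (hPl : ∀ i j, Pl i j ∈ Set.Icc (0 : ℝ) 1) (hPu : ∀ i j, Pu i j ∈ Set.Icc (0 : ℝ) 1)
    (hbounds : ∀ i, i ≠ abs → ∀ j, ∀ y ∈ C i,
      Pl i j ≤ (T y (C j)).toReal ∧ (T y (C j)).toReal ≤ Pu i j)
    (habs1 : Pl abs abs = 1 ∧ Pu abs abs = 1)
    (habs0 : ∀ j, j ≠ abs → Pl abs j = 0 ∧ Pu abs j = 0)
    (N₀ : Set Q) (hN₀meas : MeasurableSet N₀) (hN₀sub : N₀ ⊆ C abs)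
    (hN₀null : ∀ y, T y N₀ = 0)
    (Rl : I → ℝ) (hRl0 : ∀ i, 0 ≤ Rl i)
    (hRlC : ∀ i, i ≠ abs → ∀ y ∈ C i, Rl i ≤ R y)
    (hRlabs : ∀ y, y ∉ N₀ → Rl abs ≤ R y)
    (i₀ : I) (hi₀ : i₀ ≠ abs) (y₀ : Q) (hy₀ : y₀ ∈ C i₀) :
    sInf ((fun π => advVal N γ Rl π 0 i₀) '' {π | IsAdversary Pl Pu π}) ≤ V 0 y₀ := by
  classical
  obtain ⟨hγ0, hγ1⟩ := hγ
  have hRmax0 : 0 ≤ Rmax := le_trans (hR y₀).1 (hR y₀).2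
  -- measurability and bounds for V
  have hVmain : ∀ k t, t ≤ N → N - t ≤ k →
      Measurable (V t) ∧ ∀ y, 0 ≤ V t y ∧ V t y ≤ Rmax * ((N : ℝ) - t + 1) := by
    intro k
    induction k with
    | zero =>
        intro t htN hk
        have ht : t = N := by omega
        rw [ht]
        refine ⟨by simpa [funext hVN] using hRmeas, fun y => ?_⟩
        rw [hVN y]
        refine ⟨(hR y).1, ?_⟩
        have h1 : (N : ℝ) - N + 1 = 1 := by ring
        rw [h1, mul_one]; exact (hR y).2
    | succ k ih =>
        intro t htN hk
        by_cases hk' : N - t ≤ k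
        · exact ih t htN hk'
        · have htlt : t < N := by omega
          obtain ⟨hm1, hb1⟩ := ih (t + 1) (by omega) (by omega)
          have hb1' : ∀ y, 0 ≤ V (t + 1) y ∧ V (t + 1) y ≤ Rmax * ((N : ℝ) - t) := by
            intro y
            refine ⟨(hb1 y).1, ?_⟩
            have h := (hb1 y).2
            push_cast at h
            linarith
          have hint : ∀ y : Q, Integrable (V (t + 1)) (T y) := fun y =>
            (integrable_const (Rmax * ((N : ℝ) - t))).mono'
              hm1.aestronglyMeasurable
              (ae_of_all _ fun y' => by
                rw [Real.norm_eq_abs, abs_of_nonneg (hb1' y').1]; exact (hb1' y').2)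
          have hmint : Measurable fun y => ∫ y', V (t + 1) y' ∂(T y) :=
            (StronglyMeasurable.integral_kernel_prod_right' (κ := T)
              (f := fun p : Q × Q => V (t + 1) p.2)
              ((hm1.comp measurable_snd).stronglyMeasurable)).measurable
          have hVt : V t = fun y => R y + γ * ∫ y', V (t + 1) y' ∂(T y) :=
            funext fun y => hVi t htlt y
          constructor
          · rw [hVt]; exact hRmeas.add (measurable_const.mul hmint)
          · intro y
            rw [hVi t htlt y]
            have hint0 : 0 ≤ ∫ y', V (t + 1) y' ∂(T y) :=
              integral_nonneg fun y' => (hb1 y').1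
            have hintub : ∫ y', V (t + 1) y' ∂(T y) ≤ Rmax * ((N : ℝ) - t) := by
              calc ∫ y', V (t + 1) y' ∂(T y)
                  ≤ ∫ _, Rmax * ((N : ℝ) - t) ∂(T y) :=
                    integral_mono (hint y) (integrable_const _) fun y' => (hb1' y').2
                _ = Rmax * ((N : ℝ) - t) := by simp
            constructor
            · have := mul_nonneg hγ0 hint0
              have := (hR y).1
              linarith
            · have h1 : γ * ∫ y', V (t + 1) y' ∂(T y) ≤ Rmax * ((N : ℝ) - t) := by
                calc γ * ∫ y', V (t + 1) y' ∂(T y) ≤ 1 * ∫ y', V (t + 1) y' ∂(T y) :=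
                      mul_le_mul_of_nonneg_right hγ1 hint0
                  _ = ∫ y', V (t + 1) y' ∂(T y) := one_mul _
                  _ ≤ _ := hintub
              have h2 : R y ≤ Rmax := (hR y).2
              have hcast : ((t : ℝ) + 1) ≤ (N : ℝ) := by exact_mod_cast htlt
              push_cast at h1 ⊢
              nlinarith
  rcases Set.eq_empty_or_nonempty {π | IsAdversary Pl Pu π} with hA | ⟨π₀, hπ₀⟩
  · rw [hA, Set.image_empty, Real.sInf_empty]
    exact ((hVmain N 0 (Nat.zero_le N) (by omega)).2 y₀).1
  · have hπ₀' : IsAdversary Pl Pu π₀ := hπ₀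
    have hne : ∀ i, (rowSet Pl Pu i).Nonempty := fun i =>
      ⟨π₀ 0 i, (hπ₀' 0 i).1, (hπ₀' 0 i).2.1, (hπ₀' 0 i).2.2⟩
    choose d hd using hne
    choose rmin hrmem hrmin using fun i a =>
      rowSet_exists_min Pl Pu i ⟨d i, hd i⟩ a
    set π : ℕ → I → I → ℝ := buildTail N γ Rl d rmin N with hπdef
    have hrow : ∀ t i, π t i ∈ rowSet Pl Pu i := fun t i =>
      buildTail_mem N γ Rl hd hrmem N t i
    have hadv : IsAdversary Pl Pu π := fun t i =>
      ⟨(hrow t i).1, (hrow t i).2.1, (hrow t i).2.2⟩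
    have hspec : ∀ t, t < N → ∀ i,
        π t i = rmin i (fun j => advVal N γ Rl π (t + 1) j) := by
      intro t htlt i
      have h1 : π t = buildTail N γ Rl d rmin (N - t - 1 + 1) t :=
        buildTail_stable N γ Rl d rmin N le_rfl (N - t - 1 + 1) (by omega) t (by omega)
      have h2 : buildTail N γ Rl d rmin (N - t - 1 + 1) t i =
          rmin i (fun j => advVal N γ Rl (buildTail N γ Rl d rmin (N - t - 1)) (t + 1) j) := by
        simp only [buildTail]
        rw [if_pos (by omega)]
      have h3 : (fun j => advVal N γ Rl (buildTail N γ Rl d rmin (N - t - 1)) (t + 1) j) =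
          (fun j => advVal N γ Rl π (t + 1) j) := by
        funext j
        refine advVal_congr N γ Rl _ _ (t + 1) (fun s hs hsN => ?_) j
        exact (buildTail_stable N γ Rl d rmin N le_rfl (N - t - 1) (by omega) s
          (by omega)).symm
      rw [h1, h2, h3]
    -- the key induction
    have key : ∀ k t, t ≤ N → N - t ≤ k → ∀ i y,
        ((i ≠ abs ∧ y ∈ C i) ∨ (i = abs ∧ y ∉ N₀)) →
        advVal N γ Rl π t i ≤ V t y := by
      intro k
      induction k with
      | zero =>
          intro t htN hk i y hiy
          have ht : t = N := by omega
          rw [ht, advVal_of_ge _ _ _ _ (lt_irrefl N), hVN y]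
          rcases hiy with ⟨hi, hy⟩ | ⟨hi, hy⟩
          · exact hRlC i hi y hy
          · rw [hi]; exact hRlabs y hy
      | succ k ih =>
          intro t htN hk i y hiy
          by_cases hk' : N - t ≤ k
          · exact ih t htN hk' i y hiy
          · have htlt : t < N := by omega
            set A : I → ℝ := fun j => advVal N γ Rl π (t + 1) j with hA
            have hA0 : ∀ j, 0 ≤ A j := fun j =>
              advVal_nonneg N hγ0 hRl0 (fun t i j => (hrow t i).1 j) (t + 1) j
            obtain ⟨hm1, hb1⟩ := hVmain k (t + 1) (by omega) (by omega)
            set μ : Measure Q := T y with hμ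
            have hint : Integrable (V (t + 1)) μ :=
              (integrable_const (Rmax * ((N : ℝ) - ((t : ℝ) + 1) + 1))).mono'
                hm1.aestronglyMeasurable
                (ae_of_all _ fun y' => by
                  rw [Real.norm_eq_abs, abs_of_nonneg (hb1 y').1]
                  have h := (hb1 y').2
                  push_cast at h ⊢
                  linarith)
            have ihA : ∀ j y', ((j ≠ abs ∧ y' ∈ C j) ∨ (j = abs ∧ y' ∉ N₀)) →
                A j ≤ V (t + 1) y' := fun j y' h => ih (t + 1) (by omega) (by omega) j y' h
            -- per-cell bound
            have hAle : ∀ j, ∀ᵐ y' ∂(μ.restrict (C j)), A j ≤ V (t + 1) y' := by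
              intro j
              by_cases hj : j = abs
              · have hae : ∀ᵐ y' ∂μ, A j ≤ V (t + 1) y' := by
                  have h0 : ∀ᵐ y' ∂μ, y' ∉ N₀ := by
                    rw [← measure_eq_zero_iff_ae_notMem]
                    exact hN₀null y
                  filter_upwards [h0] with y' hy'
                  exact ihA j y' (Or.inr ⟨hj, hy'⟩)
                exact ae_restrict_of_ae hae
              · exact ae_restrict_of_forall_mem (hCmeas j)
                  (fun y' hy' => ihA j y' (Or.inl ⟨hj, hy'⟩))
            have hper : ∀ j, A j * (μ (C j)).toReal ≤ ∫ y' in C j, V (t + 1) y' ∂μ := by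
              intro j
              have h1 : ∫ _ in C j, A j ∂μ ≤ ∫ y' in C j, V (t + 1) y' ∂μ :=
                setIntegral_mono_ae_restrict
                  ((integrableOn_const_iff (by finiteness)).mpr (Or.inr (measure_lt_top μ (C j))))
                  hint.integrableOn (hAle j)
              rwa [setIntegral_const, smul_eq_mul, mul_comm] at h1
            have hsum : ∑ j, A j * (μ (C j)).toReal ≤ ∫ y', V (t + 1) y' ∂μ := by
              calc ∑ j, A j * (μ (C j)).toReal
                  ≤ ∑ j, ∫ y' in C j, V (t + 1) y' ∂μ :=
                    Finset.sum_le_sum fun j _ => hper j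
                _ = ∑' j, ∫ y' in C j, V (t + 1) y' ∂μ := (tsum_fintype _).symm
                _ = ∫ y' in ⋃ j, C j, V (t + 1) y' ∂μ :=
                    (integral_iUnion hCmeas hCdisj hint.integrableOn).symm
                _ = ∫ y', V (t + 1) y' ∂μ := by rw [hCunion, setIntegral_univ]
            rw [advVal_of_lt _ _ _ _ htlt, hVi t htlt y]
            have hμprob : IsProbabilityMeasure μ := by rw [hμ]; infer_instance
            rcases hiy with ⟨hi, hy⟩ | ⟨hi, hy⟩
            · -- non-absorbing state
              refine add_le_add (hRlC i hi y hy) (mul_le_mul_of_nonneg_left ?_ hγ0)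
              have hq : (fun j => (μ (C j)).toReal) ∈ rowSet Pl Pu i := by
                refine ⟨fun j => ENNReal.toReal_nonneg, ?_, fun j => hbounds i hi j y hy⟩
                have hsum1 : ∑ j, μ (C j) = μ Set.univ := by
                  rw [← hCunion, measure_iUnion hCdisj hCmeas, tsum_fintype]
                rw [← ENNReal.toReal_sum (fun j _ => measure_ne_top μ (C j)), hsum1,
                  measure_univ, ENNReal.toReal_one]
              calc ∑ j, advVal N γ Rl π (t + 1) j * π t i j
                  = ∑ j, A j * rmin i A j := by rw [hspec t htlt i]
                _ ≤ ∑ j, A j * (μ (C j)).toReal := hrmin i A _ hq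
                _ ≤ ∫ y', V (t + 1) y' ∂μ := hsum
            · -- absorbing state
              have hi' : abs = i := hi.symm
              subst hi'
              refine add_le_add (hRlabs y hy) (mul_le_mul_of_nonneg_left ?_ hγ0)
              have hp := hrow t abs
              have hpabs : π t abs abs = 1 := by
                refine le_antisymm ?_ (habs1.1 ▸ (hp.2.2 abs).1)
                calc π t abs abs ≤ ∑ j, π t abs j :=
                      Finset.single_le_sum (fun j _ => hp.1 j) (Finset.mem_univ abs)
                  _ = 1 := hp.2.1
              have hp0 : ∀ j, j ≠ abs → π t abs j = 0 := fun j hj =>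
                le_antisymm ((hp.2.2 j).2.trans_eq (habs0 j hj).2) (hp.1 j)
              have hsum' : ∑ j, advVal N γ Rl π (t + 1) j * π t abs j = A abs := by
                rw [Finset.sum_eq_single abs
                  (fun j _ hj => by rw [hp0 j hj, mul_zero])
                  (fun h => absurd (Finset.mem_univ abs) h)]
                rw [hpabs, mul_one]
              rw [hsum']
              have hae : ∀ᵐ y' ∂μ, A abs ≤ V (t + 1) y' := by
                have h0 : ∀ᵐ y' ∂μ, y' ∉ N₀ := by
                  rw [← measure_eq_zero_iff_ae_notMem]
                  exact hN₀null y
                filter_upwards [h0] with y' hy'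
                exact ihA abs y' (Or.inr ⟨rfl, hy'⟩)
              calc A abs = ∫ _, A abs ∂μ := by simp
                _ ≤ ∫ y', V (t + 1) y' ∂μ :=
                    integral_mono_ae (integrable_const _) hint hae
    -- conclude
    have hmem : advVal N γ Rl π 0 i₀ ∈
        (fun π => advVal N γ Rl π 0 i₀) '' {π | IsAdversary Pl Pu π} :=
      ⟨π, hadv, rfl⟩
    have hbdd : BddBelow ((fun π => advVal N γ Rl π 0 i₀) '' {π | IsAdversary Pl Pu π}) := by
      refine ⟨0, fun x hx => ?_⟩
      obtain ⟨π', hπ', rfl⟩ := hx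
      exact advVal_nonneg N hγ0 hRl0 (fun t i j => (hπ' t i).1 j) 0 i₀
    exact le_trans (csInf_le hbdd hmem)
      (key N 0 (Nat.zero_le N) (by omega) i₀ y₀ (Or.inl ⟨hi₀, hy₀⟩))
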